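/- Let m be an even positive integer and let W_m^{−1}: {0,...,m−1} → {0,...,m−1} be given by W_m^{−1}(y) = y/2 if y is even and W_m^{−1}(y) = m − (y+1)/2 if y is odd. Define the m×m matrix M by M(i,j) = v if v ≠ 0 and M(i,j) = m if v = 0, where v = (W_m^{−1}(j−1) + i − 1) mod m, for 1 ≤ i,j ≤ m. Then M is a Latin square with entries in {1,...,m} that is pair-balanced with t_{i,j} = 1 for all 1 ≤ i ≠ j ≤ m. -/
import Mathlib

/-- The inverse Williams transformation on `{0,…,m-1}`:
`W⁻¹(y) = y/2` if `y` is even, `W⁻¹(y) = m - (y+1)/2` if `y` is odd. -/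
def WinvM (m y : ℕ) : ℕ :=
  if y % 2 = 0 then y / 2 else m - (y + 1) / 2

/-- The Williams Latin square: entry `(i,j)` (for `1 ≤ i,j ≤ m`) is
`(W⁻¹(j-1) + i - 1) mod m`, with `0` replaced by `m`. -/
def WLS (m i j : ℕ) : ℕ :=
  let v := (WinvM m (j - 1) + (i - 1)) % m
  if v = 0 then m else v

lemma winv_lt {m : ℕ} (hm : 0 < m) {y : ℕ} (hy : y < m) : WinvM m y < m := by
  unfold WinvM; split_ifs <;> omega

lemma winv_inj {m : ℕ} (hm : m % 2 = 0) {x y : ℕ} (hx : x < m) (hy : y < m)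
    (h : WinvM m x = WinvM m y) : x = y := by
  unfold WinvM at h; split_ifs at h <;> omega

lemma mod_left_cancel {m : ℕ} (c : ℕ) {x y : ℕ} (hx : x < m) (hy : y < m)
    (h : (c + x) % m = (c + y) % m) : x = y := by
  have h2 : x ≡ y [MOD m] := Nat.ModEq.add_left_cancel' c h
  rwa [Nat.ModEq, Nat.mod_eq_of_lt hx, Nat.mod_eq_of_lt hy] at h2

def dd (m k : ℕ) : ℕ := if k % 2 = 0 then k else m - k

lemma dd_mem {m : ℕ} (hm : m % 2 = 0) (hm0 : 0 < m) {k : ℕ} (h1 : 1 ≤ k) (h2 : k ≤ m - 1) :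
    1 ≤ dd m k ∧ dd m k ≤ m - 1 := by unfold dd; split_ifs <;> omega

lemma dd_dd {m : ℕ} (hm : m % 2 = 0) {k : ℕ} (h1 : 1 ≤ k) (h2 : k ≤ m - 1) :
    dd m (dd m k) = k := by
  unfold dd; split_ifs <;> omega

lemma step {m : ℕ} (hm : m % 2 = 0) (hm0 : 0 < m) {k : ℕ} (h1 : 1 ≤ k) (h2 : k ≤ m - 1) :
    WinvM m k % m = (WinvM m (k - 1) + dd m k) % m := by
  unfold WinvM dd
  by_cases hk : k % 2 = 0
  · simp only [hk, if_true, show ¬((k-1) % 2 = 0) by omega, if_false, if_pos]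
    have h3 : m - (k - 1 + 1) / 2 + k = m + k / 2 := by omega
    rw [h3, Nat.add_mod_left]
  · simp only [hk, if_false, show (k-1) % 2 = 0 by omega, if_true]
    have h3 : (k - 1) / 2 + (m - k) = m - (k + 1) / 2 := by omega
    rw [h3]

lemma wls_eq_iff {m : ℕ} (hm : 0 < m) {i j b : ℕ} (hb1 : 1 ≤ b) (hb2 : b ≤ m) :
    WLS m i j = b ↔ (WinvM m (j - 1) + (i - 1)) % m = b % m := by
  have hvlt : (WinvM m (j - 1) + (i - 1)) % m < m := Nat.mod_lt _ hm
  have hbm : b % m = b ∧ b < m ∨ b % m = 0 ∧ b = m := by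
    rcases eq_or_lt_of_le hb2 with rfl | h
    · exact Or.inr ⟨Nat.mod_self b, rfl⟩
    · exact Or.inl ⟨Nat.mod_eq_of_lt h, h⟩
  simp only [WLS]
  split_ifs with h <;> rcases hbm with ⟨h1, h2⟩ | ⟨h1, h2⟩ <;> omega

lemma wls_mem {m : ℕ} (hm : 0 < m) (i j : ℕ) : WLS m i j ∈ Finset.Icc 1 m := by
  have hvlt : (WinvM m (j - 1) + (i - 1)) % m < m := Nat.mod_lt _ hm
  simp only [WLS, Finset.mem_Icc]
  split_ifs with h <;> omega

lemma wls_v_eq {m : ℕ} (hm : 0 < m) {i j i' j' : ℕ} (h : WLS m i j = WLS m i' j') :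
    (WinvM m (j - 1) + (i - 1)) % m = (WinvM m (j' - 1) + (i' - 1)) % m := by
  have hb := Finset.mem_Icc.mp (wls_mem hm i' j')
  have h1 := (wls_eq_iff hm (i := i) (j := j) hb.1 hb.2).mp h
  have h2 := (wls_eq_iff hm (i := i') (j := j') hb.1 hb.2).mp rfl
  exact h1.trans h2.symm

theorem stmt_10 (m : ℕ) (hm : 0 < m) (heven : Even m) :
    (∀ i ∈ Finset.Icc 1 m,
        Finset.image (fun j => WLS m i j) (Finset.Icc 1 m) = Finset.Icc 1 m) ∧
    (∀ j ∈ Finset.Icc 1 m,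
        Finset.image (fun i => WLS m i j) (Finset.Icc 1 m) = Finset.Icc 1 m) ∧
    (∀ a ∈ Finset.Icc 1 m, ∀ c ∈ Finset.Icc 1 m, a ≠ c →
        ((Finset.Icc 1 m ×ˢ Finset.Icc 1 (m - 1)).filter
          (fun rk => WLS m rk.1 rk.2 = a ∧ WLS m rk.1 (rk.2 + 1) = c)).card = 1) := by
  have hm2 : m % 2 = 0 := Nat.even_iff.mp heven
  refine ⟨?_, ?_, ?_⟩
  · -- rows
    intro i hi
    refine Finset.eq_of_subset_of_card_le ?_ ?_
    · intro b hb
      obtain ⟨j, _, rfl⟩ := Finset.mem_image.mp hb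
      exact wls_mem hm i j
    · rw [Finset.card_image_of_injOn]
      intro j hj j' hj' h
      simp only [Finset.coe_Icc, Set.mem_Icc] at hj hj'
      have hv := wls_v_eq hm h
      rw [Nat.add_comm (WinvM m (j - 1)), Nat.add_comm (WinvM m (j' - 1))] at hv
      have := mod_left_cancel (i - 1) (winv_lt hm (by omega : j - 1 < m))
        (winv_lt hm (by omega : j' - 1 < m)) hv
      have := winv_inj hm2 (by omega : j - 1 < m) (by omega : j' - 1 < m) this
      omega
  · -- columns
    intro j hj
    refine Finset.eq_of_subset_of_card_le ?_ ?_
    · intro b hb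
      obtain ⟨i, _, rfl⟩ := Finset.mem_image.mp hb
      exact wls_mem hm i j
    · rw [Finset.card_image_of_injOn]
      intro i hi i' hi' h
      simp only [Finset.coe_Icc, Set.mem_Icc] at hi hi'
      have hv := wls_v_eq hm h
      have := mod_left_cancel (WinvM m (j - 1)) (by omega : i - 1 < m)
        (by omega : i' - 1 < m) hv
      omega
  · -- pair balance
    intro a ha c hc hac
    simp only [Finset.mem_Icc] at ha hc
    set a' := a % m with ha'def
    set c' := c % m with hc'def
    have ha' : a' < m := Nat.mod_lt _ hm
    have hc' : c' < m := Nat.mod_lt _ hm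
    have haa : a' ≠ c' := by
      have h1 : a % m = a ∧ a < m ∨ a % m = 0 ∧ a = m := by
        rcases eq_or_lt_of_le ha.2 with rfl | h
        · exact Or.inr ⟨Nat.mod_self a, rfl⟩
        · exact Or.inl ⟨Nat.mod_eq_of_lt h, h⟩
      have h2 : c % m = c ∧ c < m ∨ c % m = 0 ∧ c = m := by
        rcases eq_or_lt_of_le hc.2 with rfl | h
        · exact Or.inr ⟨Nat.mod_self c, rfl⟩
        · exact Or.inl ⟨Nat.mod_eq_of_lt h, h⟩
      rcases h1 with ⟨e1, l1⟩ | ⟨e1, l1⟩ <;> rcases h2 with ⟨e2, l2⟩ | ⟨e2, l2⟩ <;> omega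
    set δ := (m + c' - a') % m with hδdef
    have hδ : (1 ≤ δ ∧ δ ≤ m - 1) ∧ (a' + δ) % m = c' := by
      rcases lt_or_gt_of_ne haa with h | h
      · have e2 : δ = c' - a' := by
          rw [hδdef, show m + c' - a' = m + (c' - a') by omega, Nat.add_mod_left,
            Nat.mod_eq_of_lt (by omega)]
        refine ⟨by omega, ?_⟩
        rw [e2, show a' + (c' - a') = c' by omega, Nat.mod_eq_of_lt hc']
      · have e2 : δ = m + c' - a' := Nat.mod_eq_of_lt (by omega)
        refine ⟨by omega, ?_⟩
        rw [e2, show a' + (m + c' - a') = m + c' by omega, Nat.add_mod_left,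
          Nat.mod_eq_of_lt hc']
    obtain ⟨⟨hδ1, hδ2⟩, hδ3⟩ := hδ
    have hδlt : δ < m := by omega
    set k₀ := dd m δ with hk₀def
    obtain ⟨hk₀1, hk₀2⟩ := dd_mem hm2 hm hδ1 hδ2
    have hk₀d : dd m k₀ = δ := dd_dd hm2 hδ1 hδ2
    have hddlt : ∀ k : ℕ, 1 ≤ k → k ≤ m - 1 → dd m k < m := by
      intro k h1 h2; have := dd_mem hm2 hm h1 h2; omega
    set w1 := WinvM m (k₀ - 1) with hw1def
    have hw1 : w1 < m := winv_lt hm (by omega)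
    set r₀ := (a' + m - w1) % m + 1 with hr₀def
    have hr₀lt : r₀ - 1 < m := by
      have : (a' + m - w1) % m < m := Nat.mod_lt _ hm
      omega
    have hr₀1 : 1 ≤ r₀ := by omega
    have hkey : (w1 + (r₀ - 1)) % m = a' := by
      rw [show r₀ - 1 = (a' + m - w1) % m by omega, Nat.add_mod_mod,
        show w1 + (a' + m - w1) = a' + m by omega, Nat.add_mod_right,
        Nat.mod_eq_of_lt ha']
    have hwk₀ : WinvM m k₀ = (w1 + δ) % m := by
      have hs := step hm2 hm hk₀1 hk₀2
      rw [hk₀d, ← hw1def] at hs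
      rw [← hs, Nat.mod_eq_of_lt (winv_lt hm (by omega))]
    rw [Finset.card_eq_one]
    refine ⟨(r₀, k₀), Finset.eq_singleton_iff_unique_mem.mpr ⟨?_, ?_⟩⟩
    · -- membership
      rw [Finset.mem_filter]
      refine ⟨Finset.mem_product.mpr ⟨Finset.mem_Icc.mpr ⟨hr₀1, by omega⟩,
        Finset.mem_Icc.mpr ⟨hk₀1, hk₀2⟩⟩, ?_, ?_⟩
      · rw [wls_eq_iff hm ha.1 ha.2, ← hw1def, ← ha'def]
        exact hkey
      · rw [wls_eq_iff hm hc.1 hc.2, show k₀ + 1 - 1 = k₀ by omega, ← hc'def, hwk₀,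
          Nat.mod_add_mod, show w1 + δ + (r₀ - 1) = w1 + (r₀ - 1) + δ by omega,
          ← Nat.mod_add_mod, hkey]
        exact hδ3
    · -- uniqueness
      rintro ⟨r, k⟩ hmem
      rw [Finset.mem_filter, Finset.mem_product, Finset.mem_Icc, Finset.mem_Icc] at hmem
      obtain ⟨⟨⟨hr1, hr2⟩, hk1, hk2⟩, hwa, hwc⟩ := hmem
      have h1 : (WinvM m (k - 1) + (r - 1)) % m = a' :=
        (wls_eq_iff hm ha.1 ha.2).mp hwa
      have h2 : (WinvM m k + (r - 1)) % m = c' := by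
        have := (wls_eq_iff hm hc.1 hc.2).mp hwc
        rwa [show k + 1 - 1 = k by omega] at this
      have hwk : WinvM m k = (WinvM m (k - 1) + dd m k) % m := by
        rw [← step hm2 hm hk1 hk2, Nat.mod_eq_of_lt (winv_lt hm (by omega))]
      rw [hwk, Nat.mod_add_mod] at h2
      have h3 : (WinvM m (k - 1) + (r - 1) + δ) % m = c' := by
        rw [← Nat.mod_add_mod, h1]
        exact hδ3
      rw [show WinvM m (k - 1) + dd m k + (r - 1)
        = WinvM m (k - 1) + (r - 1) + dd m k by omega] at h2
      have hdk : dd m k = δ :=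
        mod_left_cancel _ (hddlt k hk1 hk2) hδlt (h2.trans h3.symm)
      have hkk : k = k₀ := by
        rw [hk₀def, ← hdk, dd_dd hm2 hk1 hk2]
      subst hkk
      have hr : r - 1 = r₀ - 1 := by
        refine mod_left_cancel w1 (by omega) hr₀lt ?_
        rw [hkey, hw1def]
        exact h1
      simp only [Prod.mk.injEq]
      exact ⟨by omega, trivial⟩
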